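/- arXiv:1703.00755 — 3 statements merged into one kernel-verified Lean document; each statement's English description precedes it below -/
import Mathlib

section
/- Let f be a Morse polynomial in ℝ[x₁,…,xₙ]. Then the gradient ideal I_grad(f) = ⟨∂f/∂x₁, …, ∂f/∂xₙ⟩ in ℝ[x₁,…,xₙ] is a radical ideal. -/
open MvPolynomial

/-- `f ∈ ℝ[x₁,…,xₙ]` viewed as a complex polynomial via the inclusion `ℝ ⊆ ℂ`. -/
noncomputable def complexify {n : ℕ} (f : MvPolynomial (Fin n) ℝ) : MvPolynomial (Fin n) ℂ :=
  MvPolynomial.map (algebraMap ℝ ℂ) f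

/-- `p ∈ ℂⁿ` is a (complex) critical point of `f ∈ ℝ[x₁,…,xₙ]`. -/
def IsComplexCriticalPoint {n : ℕ} (f : MvPolynomial (Fin n) ℝ) (p : Fin n → ℂ) : Prop :=
  ∀ i, eval p (pderiv i (complexify f)) = 0

/-- The Hessian matrix of `f` at `p ∈ ℂⁿ`. -/
noncomputable def complexHessian {n : ℕ} (f : MvPolynomial (Fin n) ℝ) (p : Fin n → ℂ) :
    Matrix (Fin n) (Fin n) ℂ :=
  Matrix.of fun i j => eval p (pderiv i (pderiv j (complexify f)))

/-- `f` is a Morse polynomial: all complex critical points are non-degenerate and the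
critical values at distinct critical points are distinct. -/
def IsMorse {n : ℕ} (f : MvPolynomial (Fin n) ℝ) : Prop :=
  (∀ p, IsComplexCriticalPoint f p → (complexHessian f p).det ≠ 0) ∧
  (∀ p q, IsComplexCriticalPoint f p → IsComplexCriticalPoint f q → p ≠ q →
    eval p (complexify f) ≠ eval q (complexify f))

section Aux

variable {n : ℕ}

/-- The maximal ideal of polynomials vanishing at the point `p`, given by generators. -/
noncomputable def ptIdeal (p : Fin n → ℂ) : Ideal (MvPolynomial (Fin n) ℂ) :=
  Ideal.span (Set.range fun i => (X i : MvPolynomial (Fin n) ℂ) - C (p i))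

lemma sub_C_eval_mem (p : Fin n → ℂ) (h : MvPolynomial (Fin n) ℂ) :
    h - C (eval p h) ∈ ptIdeal p := by
  induction h using MvPolynomial.induction_on with
  | C a => simp
  | add f g hf hg =>
    have : f + g - C (eval p (f + g)) = (f - C (eval p f)) + (g - C (eval p g)) := by
      rw [map_add, map_add]; ring
    rw [this]; exact Ideal.add_mem _ hf hg
  | mul_X f i hf =>
    have : f * X i - C (eval p (f * X i))
        = (f - C (eval p f)) * X i + C (eval p f) * (X i - C (p i)) := by
      rw [map_mul, eval_X, map_mul]; ring
    rw [this]
    exact Ideal.add_mem _ (Ideal.mul_mem_right _ _ hf)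
      (Ideal.mul_mem_left _ _ (Ideal.subset_span ⟨i, rfl⟩))

lemma ptIdeal_eq_vanishingIdeal (p : Fin n → ℂ) :
    ptIdeal p = vanishingIdeal ℂ {p} := by
  apply le_antisymm
  · rw [ptIdeal, Ideal.span_le]
    rintro _ ⟨i, rfl⟩
    rw [SetLike.mem_coe, mem_vanishingIdeal_singleton_iff]
    simp
  · intro h hh
    rw [mem_vanishingIdeal_singleton_iff] at hh
    have := sub_C_eval_mem p h
    change eval p h = 0 at hh
    rwa [hh, map_zero, sub_zero] at this

/-- Second-order Taylor expansion: a polynomial agrees with its first-order Taylor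
polynomial at `p` modulo the square of the maximal ideal at `p`. -/
lemma taylor2 (p : Fin n → ℂ) (h : MvPolynomial (Fin n) ℂ) :
    h - C (eval p h) - ∑ j, C (eval p (pderiv j h)) * (X j - C (p j))
      ∈ ptIdeal p * ptIdeal p := by
  induction h using MvPolynomial.induction_on with
  | C a => simp
  | add f g hf hg =>
    have : f + g - C (eval p (f + g)) - ∑ j, C (eval p (pderiv j (f + g))) * (X j - C (p j))
        = (f - C (eval p f) - ∑ j, C (eval p (pderiv j f)) * (X j - C (p j)))
          + (g - C (eval p g) - ∑ j, C (eval p (pderiv j g)) * (X j - C (p j))) := by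
      simp only [map_add, add_mul]
      rw [Finset.sum_add_distrib]
      ring
    rw [this]; exact Ideal.add_mem _ hf hg
  | mul_X f i hf =>
    set S := ∑ j, C (eval p (pderiv j f)) * (X j - C (p j)) with hS
    have key : ∀ j, eval p (pderiv j (f * X i))
        = eval p (pderiv j f) * p i + eval p f * (if j = i then 1 else 0) := by
      intro j
      rw [pderiv_mul, map_add, map_mul, map_mul, eval_X, pderiv_X]
      congr
      by_cases hji : j = i <;> simp [hji, Pi.single_apply]
    have sumkey : ∑ j, C (eval p (pderiv j (f * X i))) * (X j - C (p j))
        = C (p i) * S + C (eval p f) * (X i - C (p i)) := by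
      simp only [key, map_add, C_mul, add_mul]
      rw [Finset.sum_add_distrib, hS, Finset.mul_sum]
      congr 1
      · apply Finset.sum_congr rfl; intro j _; ring
      · rw [Finset.sum_eq_single i]
        · simp
        · intro j _ hji; simp [hji]
        · intro hi; simp at hi
    have expand : f * X i - C (eval p (f * X i))
          - ∑ j, C (eval p (pderiv j (f * X i))) * (X j - C (p j))
        = (f - C (eval p f) - S) * X i + S * (X i - C (p i)) := by
      rw [sumkey, map_mul, eval_X, C_mul]
      ring
    rw [expand]
    refine Ideal.add_mem _ (Ideal.mul_mem_right _ _ hf) (Ideal.mul_mem_mul ?_ ?_)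
    · exact Ideal.sum_mem _ fun j _ => Ideal.mul_mem_left _ _ (Ideal.subset_span ⟨j, rfl⟩)
    · exact Ideal.subset_span ⟨i, rfl⟩

/-- At a nondegenerate critical point, the maximal ideal is contained in the gradient
ideal plus the square of the maximal ideal. -/
lemma pt_le_sup_sq (f : MvPolynomial (Fin n) ℝ) (p : Fin n → ℂ)
    (hcrit : IsComplexCriticalPoint f p) (hdet : (complexHessian f p).det ≠ 0) :
    ptIdeal p ≤ Ideal.span (Set.range fun i => pderiv i (complexify f))
        ⊔ ptIdeal p * ptIdeal p := by
  set I := Ideal.span (Set.range fun i => pderiv i (complexify f)) with hI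
  set J := I ⊔ ptIdeal p * ptIdeal p with hJ
  set M : Matrix (Fin n) (Fin n) ℂ := (complexHessian f p).transpose with hM
  have hMdet : IsUnit M.det := by
    rw [Matrix.det_transpose]; exact isUnit_iff_ne_zero.mpr hdet
  have hrow : ∀ j, ∑ k, C (M j k) * (X k - C (p k)) ∈ J := by
    intro j
    have h1 : pderiv j (complexify f) ∈ J :=
      (le_sup_left : I ≤ J) <| Ideal.subset_span ⟨j, rfl⟩
    have h2 := taylor2 p (pderiv j (complexify f))
    rw [hcrit j, map_zero, sub_zero] at h2
    have h2' : pderiv j (complexify f) - ∑ k, C (M j k) * (X k - C (p k)) ∈ J := by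
      refine (le_sup_right : ptIdeal p * ptIdeal p ≤ J) ?_
      convert h2 using 2
      rfl
    have := Ideal.sub_mem _ h1 h2'
    simpa using this
  intro x hx
  rw [ptIdeal] at hx
  refine Ideal.span_le.mpr ?_ hx
  rintro _ ⟨i, rfl⟩
  have calc1 : (X i : MvPolynomial (Fin n) ℂ) - C (p i)
      = ∑ j, C (M⁻¹ i j) * ∑ k, C (M j k) * (X k - C (p k)) := by
    have inv : M⁻¹ * M = 1 := Matrix.nonsing_inv_mul M hMdet
    have step : ∑ j, C (M⁻¹ i j) * ∑ k, C (M j k) * (X k - C (p k))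
        = ∑ k, C ((M⁻¹ * M) i k) * (X k - C (p k)) := by
      simp_rw [Finset.mul_sum, Matrix.mul_apply, map_sum, Finset.sum_mul, ← mul_assoc, ← map_mul]
      exact Finset.sum_comm
    rw [step, inv]
    rw [Finset.sum_eq_single i]
    · simp
    · intro j _ hji; simp [Matrix.one_apply, (Ne.symm hji : ¬ i = j)]
    · intro hi; simp at hi
  show X i - C (p i) ∈ J
  rw [calc1]
  exact Ideal.sum_mem _ fun j _ => Ideal.mul_mem_left _ _ (hrow j)

/-- The complexified gradient ideal of a polynomial all of whose complex critical points
are nondegenerate is radical. -/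
lemma complex_grad_isRadical (f : MvPolynomial (Fin n) ℝ)
    (hf : ∀ p, IsComplexCriticalPoint f p → (complexHessian f p).det ≠ 0) :
    (Ideal.span (Set.range fun i => pderiv i (complexify f))).IsRadical := by
  set I := Ideal.span (Set.range fun i => pderiv i (complexify f)) with hI
  intro h hh
  by_contra hne
  have hK : I.colon (Ideal.span {h}) ≠ ⊤ := by
    intro htop
    exact hne (by simpa using Ideal.mem_colon_span_singleton.mp (htop ▸ (Submodule.mem_top) :
      (1 : MvPolynomial (Fin n) ℂ) ∈ I.colon (Ideal.span {h})))
  obtain ⟨m, hmmax, hKm⟩ := Ideal.exists_le_maximal _ hK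
  have hIm : I ≤ m := fun y hy =>
    hKm (Ideal.mem_colon_span_singleton.mpr (Ideal.mul_mem_right h I hy))
  have hhm : h ∈ m := by
    rw [Ideal.radical_eq_jacobson] at hh
    exact (Ideal.mem_sInf.mp hh) ⟨hIm, hmmax⟩
  obtain ⟨p, hp⟩ := isMaximal_iff_eq_vanishingIdeal_singleton.mp hmmax
  have hm_eq : m = ptIdeal p := by rw [hp, ptIdeal_eq_vanishingIdeal]
  have hcrit : IsComplexCriticalPoint f p := by
    intro i
    have : pderiv i (complexify f) ∈ m := hIm (Ideal.subset_span ⟨i, rfl⟩)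
    rw [hp] at this
    exact (mem_vanishingIdeal_singleton_iff p _).mp this
  have hkey : m ≤ I ⊔ m * m := by
    rw [hm_eq]; exact pt_le_sup_sq f p hcrit (hf p hcrit)
  haveI := hmmax.isPrime
  set L := Localization.AtPrime m with hL
  set φ := algebraMap (MvPolynomial (Fin n) ℂ) L with hφ
  have hmap : m.map φ ≤ I.map φ ⊔ (m.map φ) • (m.map φ) := by
    have := Ideal.map_mono (f := φ) hkey
    rwa [Ideal.map_sup, Ideal.map_mul, ← smul_eq_mul (α := Ideal L)] at this
  have hfg : (m.map φ).FG := by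
    refine Ideal.FG.map ?_ φ
    rw [hm_eq, ptIdeal]
    exact ⟨(Set.finite_range _).toFinset, by rw [Set.Finite.coe_toFinset]⟩
  have hle : m.map φ ≤ Ideal.jacobson ⊥ := by
    rw [Localization.AtPrime.map_eq_maximalIdeal]
    exact IsLocalRing.maximalIdeal_le_jacobson ⊥
  have hfin : m.map φ ≤ I.map φ :=
    Submodule.le_of_le_smul_of_le_jacobson_bot hfg hle hmap
  have hmem : φ h ∈ I.map φ := hfin (Ideal.mem_map_of_mem φ hhm)
  rw [IsLocalization.mem_map_algebraMap_iff m.primeCompl L] at hmem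
  obtain ⟨⟨x, s⟩, hxs⟩ := hmem
  have : φ (h * s) = φ x := by rw [map_mul]; exact hxs
  obtain ⟨c, hc⟩ := (IsLocalization.eq_iff_exists m.primeCompl L).mp this
  have hmem2 : ((c : MvPolynomial (Fin n) ℂ) * s) * h ∈ I := by
    rw [show ((c : MvPolynomial (Fin n) ℂ) * s) * h = (c : MvPolynomial (Fin n) ℂ) * (h * s) by
      ring, hc]
    exact Ideal.mul_mem_left _ _ x.2
  exact (mul_mem c.2 s.2 : (c : MvPolynomial (Fin n) ℂ) * s ∈ m.primeCompl)
    (hKm (Ideal.mem_colon_span_singleton.mpr hmem2))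

/-- Coefficientwise real part of a complex multivariate polynomial, as an additive map. -/
noncomputable def rePoly {n : ℕ} : MvPolynomial (Fin n) ℂ →+ MvPolynomial (Fin n) ℝ :=
  (AddMonoidAlgebra.coeffAddEquiv (R := ℝ) (M := Fin n →₀ ℕ)).symm.toAddMonoidHom.comp
    ((Finsupp.mapRange.addMonoidHom Complex.reAddGroupHom).comp
      (AddMonoidAlgebra.coeffAddEquiv (R := ℂ) (M := Fin n →₀ ℕ)).toAddMonoidHom)

lemma rePoly_monomial (d : Fin n →₀ ℕ) (c : ℂ) :
    rePoly (monomial d c) = monomial d c.re := by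
  rw [← single_eq_monomial, ← single_eq_monomial]
  exact congrArg AddMonoidAlgebra.ofCoeff (Finsupp.mapRange_single (f := Complex.re) (hf := Complex.zero_re))

lemma rePoly_map (q : MvPolynomial (Fin n) ℝ) :
    rePoly (MvPolynomial.map (algebraMap ℝ ℂ) q) = q := by
  induction q using MvPolynomial.induction_on' with
  | monomial d c => rw [map_monomial, rePoly_monomial]; simp [Complex.ofReal_re]
  | add f g hf hg => rw [map_add, map_add, hf, hg]

lemma rePoly_mul_map (a : MvPolynomial (Fin n) ℂ) (b : MvPolynomial (Fin n) ℝ) :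
    rePoly (a * MvPolynomial.map (algebraMap ℝ ℂ) b) = rePoly a * b := by
  induction a using MvPolynomial.induction_on' with
  | add f g hf hg => rw [add_mul, map_add, hf, hg, map_add, add_mul]
  | monomial d c =>
    induction b using MvPolynomial.induction_on' with
    | add f g hf hg => simp only [mul_add, map_add, hf, hg]
    | monomial e r =>
      rw [map_monomial, monomial_mul, rePoly_monomial, rePoly_monomial, monomial_mul]
      congr 1
      simp [Complex.mul_re]

end Aux

/-- The gradient ideal of a Morse polynomial `f ∈ ℝ[x₁,…,xₙ]` is radical. -/
theorem gradient_ideal_isRadical_of_isMorse {n : ℕ} (f : MvPolynomial (Fin n) ℝ)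
    (hf : IsMorse f) :
    (Ideal.span (Set.range fun i => pderiv i f)).IsRadical := by
  intro g hg
  obtain ⟨k, hk⟩ := hg
  rw [Ideal.mem_span_range_iff_exists_fun] at hk
  obtain ⟨c, hc⟩ := hk
  -- push `g ^ k` to `ℂ`
  have hmapmem : (MvPolynomial.map (algebraMap ℝ ℂ) g) ^ k
      ∈ Ideal.span (Set.range fun i => pderiv i (complexify f)) := by
    rw [Ideal.mem_span_range_iff_exists_fun]
    refine ⟨fun i => MvPolynomial.map (algebraMap ℝ ℂ) (c i), ?_⟩
    rw [← map_pow, ← hc, map_sum]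
    apply Finset.sum_congr rfl
    intro i _
    rw [map_mul, complexify, pderiv_map]
  have hgC : MvPolynomial.map (algebraMap ℝ ℂ) g
      ∈ Ideal.span (Set.range fun i => pderiv i (complexify f)) :=
    complex_grad_isRadical f hf.1 ⟨k, hmapmem⟩
  rw [Ideal.mem_span_range_iff_exists_fun] at hgC
  obtain ⟨d, hd⟩ := hgC
  have : g = ∑ i, rePoly (d i) * pderiv i f := by
    have := congrArg rePoly hd
    rw [rePoly_map] at this
    rw [← this, map_sum]
    apply Finset.sum_congr rfl
    intro i _
    rw [complexify, pderiv_map, rePoly_mul_map]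
  rw [this]
  exact Ideal.sum_mem _ fun i _ =>
    Ideal.mul_mem_left _ _ (Ideal.subset_span ⟨i, rfl⟩)
end

section
/- Let f be a Morse polynomial in ℝ[x₁,…,xₙ] and let fℂ ∈ ℂ[x₁,…,xₙ] be f viewed as a complex polynomial. Then the gradient ideal ⟨∂fℂ/∂x₁, …, ∂fℂ/∂xₙ⟩ of ℂ[x₁,…,xₙ] is a radical ideal. -/
open MvPolynomial

lemma derivation_mk_eq_sum {n : ℕ} {I : Ideal (MvPolynomial (Fin n) ℂ)}
    {M : Type*} [AddCommGroup M] [Module ℂ M]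
    [Module (MvPolynomial (Fin n) ℂ ⧸ I) M]
    [IsScalarTower ℂ (MvPolynomial (Fin n) ℂ ⧸ I) M]
    (D : Derivation ℂ (MvPolynomial (Fin n) ℂ ⧸ I) M) (p : MvPolynomial (Fin n) ℂ) :
    D (Ideal.Quotient.mk I p)
      = ∑ j, Ideal.Quotient.mk I (pderiv j p) • D (Ideal.Quotient.mk I (X j)) := by
  induction p using MvPolynomial.induction_on with
  | C a =>
      have h1 : (Ideal.Quotient.mk I) (C a) = algebraMap ℂ (MvPolynomial (Fin n) ℂ ⧸ I) a := by
        rw [IsScalarTower.algebraMap_apply ℂ (MvPolynomial (Fin n) ℂ) (MvPolynomial (Fin n) ℂ ⧸ I)]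
        rfl
      simp [h1]
      exact (Finset.sum_eq_zero fun j _ => zero_smul (MvPolynomial (Fin n) ℂ ⧸ I) (D (Ideal.Quotient.mk I (X j)))).symm
  | add p q hp hq =>
      simp [map_add, hp, hq, add_smul, Finset.sum_add_distrib]
  | mul_X p i hp =>
      rw [map_mul, Derivation.leibniz, hp, Finset.smul_sum]
      have hR : ∀ j : Fin n, Ideal.Quotient.mk I (pderiv j (p * X i))
            • D (Ideal.Quotient.mk I (X j))
          = Ideal.Quotient.mk I (X i) •
              (Ideal.Quotient.mk I (pderiv j p) • D (Ideal.Quotient.mk I (X j)))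
            + Ideal.Quotient.mk I (p * pderiv j (X i)) • D (Ideal.Quotient.mk I (X j)) := by
        intro j
        rw [pderiv_mul, map_add, add_smul, smul_smul, ← map_mul, mul_comm (X i)]
      rw [Finset.sum_congr rfl fun j _ => hR j, Finset.sum_add_distrib, add_comm]
      congr 1
      have hB : (∑ j, Ideal.Quotient.mk I (p * pderiv j (X i)) • D (Ideal.Quotient.mk I (X j)))
          = Ideal.Quotient.mk I p • D (Ideal.Quotient.mk I (X i)) := by
        rw [Finset.sum_eq_single i
          (fun j _ hj => by rw [pderiv_X_of_ne (Ne.symm hj), mul_zero, map_zero]; exact zero_smul (MvPolynomial (Fin n) ℂ ⧸ I) (D (Ideal.Quotient.mk I (X j))))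
          (fun h => absurd (Finset.mem_univ i) h)]
        rw [pderiv_X_self, mul_one]
      rw [hB]

set_option maxHeartbeats 1000000 in
set_option synthInstance.maxHeartbeats 400000 in
/-- The gradient ideal in `ℂ[x₁,…,xₙ]` of the complexification of a Morse polynomial
`f ∈ ℝ[x₁,…,xₙ]` is radical. -/
theorem complex_gradient_ideal_isRadical_of_isMorse {n : ℕ} (f : MvPolynomial (Fin n) ℝ)
    (hf : IsMorse f) :
    (Ideal.span (Set.range fun i => pderiv i (complexify f))).IsRadical := by
  classical
  set F : MvPolynomial (Fin n) ℂ := complexify f with hF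
  set I : Ideal (MvPolynomial (Fin n) ℂ) := Ideal.span (Set.range fun i => pderiv i F) with hI
  set Hm : Matrix (Fin n) (Fin n) (MvPolynomial (Fin n) ℂ) :=
    Matrix.of (fun i j => pderiv i (pderiv j F)) with hHm
  have hgen : ∀ i, pderiv i F ∈ I := fun i => Ideal.subset_span ⟨i, rfl⟩
  -- Step 1: det Hm is invertible modulo I
  have hunit : IsUnit (Ideal.Quotient.mk I Hm.det) := by
    have hloc : MvPolynomial.zeroLocus ℂ (I ⊔ Ideal.span {Hm.det}) = ∅ := by
      rw [Set.eq_empty_iff_forall_notMem]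
      intro p hp
      rw [MvPolynomial.mem_zeroLocus_iff] at hp
      have hcrit : IsComplexCriticalPoint f p := fun i =>
        hp _ (Ideal.mem_sup_left (hgen i))
      have hdet : eval p Hm.det = 0 :=
        hp _ (Ideal.mem_sup_right (Ideal.subset_span (Set.mem_singleton _)))
      have hmap : complexHessian f p = (eval p).mapMatrix Hm := by
        ext i j; rfl
      have : (complexHessian f p).det = 0 := by
        rw [hmap, ← RingHom.map_det, hdet]
      exact hf.1 p hcrit this
    have hrad := MvPolynomial.vanishingIdeal_zeroLocus_eq_radical (K := ℂ) (I ⊔ Ideal.span {Hm.det})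
    rw [hloc, MvPolynomial.vanishingIdeal_empty] at hrad
    have htop : I ⊔ Ideal.span {Hm.det} = ⊤ := Ideal.radical_eq_top.mp hrad.symm
    have h1 : (1 : MvPolynomial (Fin n) ℂ) ∈ I ⊔ Ideal.span {Hm.det} := by
      rw [htop]; trivial
    rw [Submodule.mem_sup] at h1
    obtain ⟨a, haI, b, hb, hab⟩ := h1
    rw [Ideal.mem_span_singleton'] at hb
    obtain ⟨c, rfl⟩ := hb
    have hmul : Ideal.Quotient.mk I c * Ideal.Quotient.mk I Hm.det = 1 := by
      rw [← map_mul, ← map_one (Ideal.Quotient.mk I), Ideal.Quotient.mk_eq_mk_iff_sub_mem]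
      have : c * Hm.det - 1 = -a := by rw [← hab]; ring
      rw [this]
      exact neg_mem haI
    exact IsUnit.of_mul_eq_one _ (by rw [mul_comm] at hmul; exact hmul)
  -- Step 2: the quotient is unramified over ℂ, hence reduced
  rw [Ideal.isRadical_iff_quotient_reduced]
  set S := MvPolynomial (Fin n) ℂ ⧸ I with hS
  have hsub : Subsingleton (Ω[S⁄ℂ]) := by
    set D := KaehlerDifferential.D ℂ S with hD
    set v : Fin n → Ω[S⁄ℂ] := fun j => D (Ideal.Quotient.mk I (X j)) with hv
    set B : Matrix (Fin n) (Fin n) S :=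
      Matrix.of (fun i j => Ideal.Quotient.mk I (pderiv j (pderiv i F))) with hBdef
    have hrel : ∀ i, ∑ j, B i j • v j = 0 := by
      intro i
      have h0 : Ideal.Quotient.mk I (pderiv i F) = 0 :=
        Ideal.Quotient.eq_zero_iff_mem.mpr (hgen i)
      have h2 := derivation_mk_eq_sum D (pderiv i F)
      rw [h0, map_zero] at h2
      exact h2.symm
    have hdetB : IsUnit B.det := by
      have hBt : B = Matrix.transpose ((Ideal.Quotient.mk I).mapMatrix Hm) := by
        ext i j; rfl
      rw [hBt, Matrix.det_transpose, ← RingHom.map_det]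
      exact hunit
    have hvz : ∀ k, v k = 0 := by
      intro k
      have h2 : B.det • v k = 0 := by
        calc B.det • v k = ∑ j, ((B.adjugate * B) k j) • v j := by
              rw [Matrix.adjugate_mul]
              rw [Finset.sum_eq_single k
                (fun j _ hj => by
                  rw [Matrix.smul_apply, Matrix.one_apply_ne (Ne.symm hj), smul_eq_mul, mul_zero]; exact zero_smul S (v j))
                (fun h => absurd (Finset.mem_univ k) h)]
              rw [Matrix.smul_apply, Matrix.one_apply_eq, smul_eq_mul, mul_one]
          _ = ∑ j, ∑ i, (B.adjugate k i * B i j) • v j := by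
              simp only [Matrix.mul_apply]; exact Finset.sum_congr rfl fun j _ => Finset.sum_smul (R := S) (M := Ω[S⁄ℂ])
          _ = ∑ i, B.adjugate k i • ∑ j, B i j • v j := by
              rw [Finset.sum_comm]
              exact Finset.sum_congr rfl fun i _ => (Finset.sum_congr rfl fun j _ => mul_smul (B.adjugate k i) (B i j) (v j)).trans
                  (Finset.smul_sum (r := B.adjugate k i) (f := fun j => B i j • v j) (s := Finset.univ)).symm
          _ = 0 := by simp [hrel]
      obtain ⟨u, hu⟩ := hdetB
      calc v k = ((↑u⁻¹ : S) * B.det) • v k := by rw [← hu, Units.inv_mul]; exact (one_smul S (v k)).symm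
        _ = (↑u⁻¹ : S) • (B.det • v k) := mul_smul (↑u⁻¹ : S) B.det (v k)
        _ = 0 := by rw [h2, smul_zero]
    have hDz : ∀ s : S, D s = 0 := by
      intro s
      obtain ⟨p, rfl⟩ := Ideal.Quotient.mk_surjective s
      rw [hD, derivation_mk_eq_sum]
      have : ∀ j : Fin n, KaehlerDifferential.D ℂ S (Ideal.Quotient.mk I (X j)) = 0 := fun j =>
        hvz j
      simp [this]
    have hb : Submodule.span S (Set.range (KaehlerDifferential.D ℂ S)) ≤ ⊥ :=
      Submodule.span_le.mpr (by rintro _ ⟨s, rfl⟩; exact hDz s)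
    have hall : ∀ x : Ω[S⁄ℂ], x = 0 := fun x =>
      (Submodule.mem_bot S).mp
        (hb ((KaehlerDifferential.span_range_derivation ℂ S) ▸ Submodule.mem_top))
    exact subsingleton_of_forall_eq 0 fun y => hall y
  haveI : Algebra.FormallyUnramified ℂ S := ⟨hsub⟩
  haveI : Algebra.FiniteType ℂ S := by
    apply Algebra.FiniteType.of_surjective (Ideal.Quotient.mkₐ ℂ I)
    exact Ideal.Quotient.mkₐ_surjective ℂ I
  exact Algebra.FormallyUnramified.isReduced_of_field ℂ S
end

section
/- In the polynomial ring ℝ[x,y], with f(x,y) = x² + (xy − 1)², the identity f − 1 = (1/2)·x·(1 − y²)·∂f/∂x + (1/2)·y·(1 + y²)·∂f/∂y holds; in particular f − 1 belongs to the gradient ideal ⟨∂f/∂x, ∂f/∂y⟩ of ℝ[x,y]. -/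
open MvPolynomial

/-- For `f(x,y) = x² + (xy − 1)² ∈ ℝ[x,y]`, the identity
`f − 1 = (1/2)·x·(1 − y²)·∂f/∂x + (1/2)·y·(1 + y²)·∂f/∂y` holds; in particular
`f − 1` belongs to the gradient ideal `⟨∂f/∂x, ∂f/∂y⟩`. -/
theorem sub_one_mem_gradient_ideal :
    (X 0 ^ 2 + (X 0 * X 1 - 1) ^ 2 : MvPolynomial (Fin 2) ℝ) - 1 =
        C (1 / 2 : ℝ) * X 0 * (1 - X 1 ^ 2) *
            pderiv 0 (X 0 ^ 2 + (X 0 * X 1 - 1) ^ 2 : MvPolynomial (Fin 2) ℝ) +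
          C (1 / 2 : ℝ) * X 1 * (1 + X 1 ^ 2) *
            pderiv 1 (X 0 ^ 2 + (X 0 * X 1 - 1) ^ 2 : MvPolynomial (Fin 2) ℝ) ∧
    (X 0 ^ 2 + (X 0 * X 1 - 1) ^ 2 : MvPolynomial (Fin 2) ℝ) - 1 ∈
      Ideal.span {pderiv 0 (X 0 ^ 2 + (X 0 * X 1 - 1) ^ 2 : MvPolynomial (Fin 2) ℝ),
        pderiv 1 (X 0 ^ 2 + (X 0 * X 1 - 1) ^ 2 : MvPolynomial (Fin 2) ℝ)} := by
  have h : (X 0 ^ 2 + (X 0 * X 1 - 1) ^ 2 : MvPolynomial (Fin 2) ℝ) - 1 =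
        C (1 / 2 : ℝ) * X 0 * (1 - X 1 ^ 2) *
            pderiv 0 (X 0 ^ 2 + (X 0 * X 1 - 1) ^ 2 : MvPolynomial (Fin 2) ℝ) +
          C (1 / 2 : ℝ) * X 1 * (1 + X 1 ^ 2) *
            pderiv 1 (X 0 ^ 2 + (X 0 * X 1 - 1) ^ 2 : MvPolynomial (Fin 2) ℝ) := by
    simp only [map_add, map_sub, map_mul, map_one, map_pow, pderiv_X, pderiv_X_self,
      Pi.single_apply]
    norm_num
    have hc : (C (1 / 2 : ℝ) : MvPolynomial (Fin 2) ℝ) * 2 = 1 := by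
      rw [show (2 : MvPolynomial (Fin 2) ℝ) = C 2 from (map_ofNat C 2).symm, ← map_mul]
      norm_num
    linear_combination (-((X 0 : MvPolynomial (Fin 2) ℝ) ^ 2 + (X 0 * X 1 - 1) ^ 2 - 1)) * hc
  refine ⟨h, ?_⟩
  rw [h]
  exact add_mem (Ideal.mul_mem_left _ _ (Ideal.subset_span (Set.mem_insert _ _)))
    (Ideal.mul_mem_left _ _ (Ideal.subset_span (Set.mem_insert_of_mem _ rfl)))
end
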